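/- A separable LMM density matrix σ on ℂ^d ⊗ ℂ^d attains Tr σ² = 1/d if and only if σ = (1/d) Σ_{s=0}^{d-1} |φ_s, ψ_s⟩⟨φ_s, ψ_s| where {φ_s} and {ψ_s} are orthonormal bases of ℂ^d. -/

import Mathlib

open Matrix

/-- `σ` is a separable state: a convex combination of pure product states. -/
def IsSeparableState (d : ℕ) [NeZero d]
    (σ : Matrix (ZMod d × ZMod d) (ZMod d × ZMod d) ℂ) : Prop :=
  ∃ (n : ℕ) (lam : Fin n → ℝ) (φ ψ : Fin n → ZMod d → ℂ),
    (∀ α, 0 ≤ lam α) ∧ (∑ α, lam α = 1) ∧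
    (∀ α, ∑ s : ZMod d, ‖φ α s‖ ^ 2 = 1) ∧ (∀ α, ∑ s : ZMod d, ‖ψ α s‖ ^ 2 = 1) ∧
    σ = ∑ α, (lam α : ℂ) •
      Matrix.vecMulVec (fun p : ZMod d × ZMod d => φ α p.1 * ψ α p.2)
        (star (fun p : ZMod d × ZMod d => φ α p.1 * ψ α p.2))

noncomputable section AuxSepLMM

open Complex

/-- auxiliary sesquilinear pairing on tuples -/
def ip {I : Type*} [Fintype I] (x y : I → ℂ) : ℂ := ∑ s, (starRingEnd ℂ) (x s) * y s

/-- view a tuple as an element of Euclidean space -/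
def toE {I : Type*} [Fintype I] (x : I → ℂ) : EuclideanSpace ℂ I := WithLp.toLp 2 x

variable {I J : Type*} [Fintype I] [Fintype J]

@[simp] lemma toE_apply (x : I → ℂ) (s : I) : toE x s = x s := rfl

lemma ip_eq_inner (x y : I → ℂ) : ip x y = @inner ℂ _ _ (toE x) (toE y) := by
  simp [ip, PiLp.inner_apply, RCLike.inner_apply, toE, mul_comm]

lemma norm_toE (x : I → ℂ) (h : ∑ s, ‖x s‖ ^ 2 = 1) : ‖toE x‖ = 1 := by
  rw [EuclideanSpace.norm_eq]
  simp only [toE_apply, h]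
  norm_num

lemma toE_ne_zero (x : I → ℂ) (h : ∑ s, ‖x s‖ ^ 2 = 1) : toE x ≠ 0 := by
  intro h0
  have := norm_toE x h
  rw [h0] at this; simp at this

lemma ip_le_one (x y : I → ℂ) (hx : ∑ s, ‖x s‖ ^ 2 = 1) (hy : ∑ s, ‖y s‖ ^ 2 = 1) :
    ‖ip x y‖ ≤ 1 := by
  rw [ip_eq_inner]
  simpa [norm_toE x hx, norm_toE y hy] using norm_inner_le_norm (𝕜 := ℂ) (toE x) (toE y)

lemma ip_self (x : I → ℂ) (hx : ∑ s, ‖x s‖ ^ 2 = 1) : ip x x = 1 := by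
  rw [ip_eq_inner, @inner_self_eq_norm_sq_to_K ℂ, norm_toE x hx]
  norm_num

lemma ip_eq_one_case (x y : I → ℂ) (hx : ∑ s, ‖x s‖ ^ 2 = 1) (hy : ∑ s, ‖y s‖ ^ 2 = 1)
    (h : ‖ip x y‖ = 1) : y = fun s => ip x y * x s := by
  have := (norm_inner_eq_norm_iff (𝕜 := ℂ) (toE_ne_zero x hx) (toE_ne_zero y hy)).mp (by
    rw [← ip_eq_inner, norm_toE x hx, norm_toE y hy, h]; norm_num)
  obtain ⟨r, hr0, hr⟩ := this
  have hyx : ∀ s, y s = r * x s := fun s => by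
    have h' := congrArg (fun v : EuclideanSpace ℂ I => v s) hr
    simpa [toE_apply] using h'
  have hipr : ip x y = r := by
    simp only [ip, hyx]
    rw [show (∑ s, (starRingEnd ℂ) (x s) * (r * x s)) = r * ∑ s, (starRingEnd ℂ) (x s) * x s by
      rw [Finset.mul_sum]; exact Finset.sum_congr rfl fun _ _ => by ring]
    rw [show (∑ s, (starRingEnd ℂ) (x s) * x s) = ip x x from rfl, ip_self x hx, mul_one]
  funext s
  rw [hipr]; exact hyx s

lemma ip_prod (f f' : I → ℂ) (g g' : J → ℂ) :
    ip (fun p : I × J => f p.1 * g p.2) (fun p : I × J => f' p.1 * g' p.2)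
      = ip f f' * ip g g' := by
  simp only [ip, Fintype.sum_prod_type, _root_.map_mul, Finset.sum_mul, Finset.mul_sum]
  rw [Finset.sum_comm]
  refine Finset.sum_congr rfl fun a _ => Finset.sum_congr rfl fun b _ => by ring

lemma trace_vmv (u w : I → ℂ) :
    (vecMulVec u (star u) * vecMulVec w (star w)).trace = ((normSq (ip u w) : ℝ) : ℂ) := by
  rw [show ((normSq (ip u w) : ℝ) : ℂ) = ip u w * (starRingEnd ℂ) (ip u w) from
    (Complex.mul_conj _).symm]
  simp only [Matrix.trace, Matrix.diag, Matrix.mul_apply, vecMulVec_apply, Pi.star_apply, ip,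
    map_sum, _root_.map_mul, RingHomCompTriple.comp_apply, RingHom.id_apply, starRingEnd_apply]
  rw [Finset.sum_comm]
  simp only [Finset.mul_sum, Finset.sum_mul]
  rw [Finset.sum_comm]
  refine Finset.sum_congr rfl fun q _ => Finset.sum_congr rfl fun p _ => ?_
  simp [star_star]
  ring

lemma trace_sq {K : Type*} [Fintype K] (c : K → ℂ) (v : K → I → ℂ) :
    ((∑ α, c α • vecMulVec (v α) (star (v α))) * (∑ β, c β • vecMulVec (v β) (star (v β)))).trace
      = ∑ α, ∑ β, c α * c β * ((normSq (ip (v α) (v β)) : ℝ) : ℂ) := by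
  rw [Finset.sum_mul_sum, Matrix.trace_sum]
  refine Finset.sum_congr rfl fun α _ => ?_
  rw [Matrix.trace_sum]
  refine Finset.sum_congr rfl fun β _ => ?_
  rw [smul_mul_assoc, mul_smul_comm, Matrix.trace_smul, Matrix.trace_smul, trace_vmv]
  simp [smul_smul, mul_assoc]

lemma prod_norm_one (f : I → ℂ) (g : J → ℂ) (hf : ∑ s, ‖f s‖ ^ 2 = 1)
    (hg : ∑ s, ‖g s‖ ^ 2 = 1) :
    ∑ p : I × J, ‖f p.1 * g p.2‖ ^ 2 = 1 := by
  simp only [Fintype.sum_prod_type, norm_mul, mul_pow]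
  rw [← Finset.sum_mul_sum, hf, hg, one_mul]

variable {d n : ℕ} [NeZero d]


lemma marg_sum (lam : Fin n → ℝ) (x : Fin n → ZMod d → ℂ)
    (hK : ∀ a b, ∑ α, (lam α : ℂ) * (x α a * (starRingEnd ℂ) (x α b))
      = if a = b then ((d : ℂ))⁻¹ else 0)
    (y : ZMod d → ℂ) (hy : ip y y = 1) :
    ∑ β, (lam β : ℂ) * ((normSq (ip y (x β)) : ℝ) : ℂ) = ((d : ℂ))⁻¹ := by
  have step1 : ∀ β, (lam β : ℂ) * ((normSq (ip y (x β)) : ℝ) : ℂ)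
      = ∑ a, ∑ b, ((starRingEnd ℂ) (y a) * y b) *
          ((lam β : ℂ) * (x β a * (starRingEnd ℂ) (x β b))) := by
    intro β
    rw [← Complex.mul_conj (ip y (x β))]
    have hconj : (starRingEnd ℂ) (ip y (x β)) = ∑ b, y b * (starRingEnd ℂ) (x β b) := by
      simp only [ip, map_sum, _root_.map_mul, starRingEnd_apply, star_star]
    rw [hconj, show ip y (x β) = ∑ a, (starRingEnd ℂ) (y a) * x β a from rfl,
      Finset.sum_mul_sum]
    rw [Finset.mul_sum]
    refine Finset.sum_congr rfl fun a _ => ?_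
    rw [Finset.mul_sum]
    refine Finset.sum_congr rfl fun b _ => by ring
  rw [Finset.sum_congr rfl fun β _ => step1 β]
  rw [Finset.sum_comm]
  have key : ∀ a, ∑ β, ∑ b, ((starRingEnd ℂ) (y a) * y b) *
      ((lam β : ℂ) * (x β a * (starRingEnd ℂ) (x β b)))
      = ((starRingEnd ℂ) (y a) * y a) * ((d : ℂ))⁻¹ := by
    intro a
    rw [Finset.sum_comm]
    have h2 : ∀ b, ∑ β, ((starRingEnd ℂ) (y a) * y b) *
        ((lam β : ℂ) * (x β a * (starRingEnd ℂ) (x β b)))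
        = ((starRingEnd ℂ) (y a) * y b) * (if a = b then ((d : ℂ))⁻¹ else 0) := by
      intro b
      rw [← Finset.mul_sum, hK a b]
    rw [Finset.sum_congr rfl fun b _ => h2 b]
    simp [Finset.sum_ite_eq, mul_ite]
  rw [Finset.sum_congr rfl fun a _ => key a, ← Finset.sum_mul,
    show (∑ a, (starRingEnd ℂ) (y a) * y a) = ip y y from rfl, hy, one_mul]

lemma sum_self_conj (x : ZMod d → ℂ) (hx : ∑ s, ‖x s‖ ^ 2 = 1) :
    ∑ t, x t * (starRingEnd ℂ) (x t) = 1 := by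
  have h1 : ∀ t, x t * (starRingEnd ℂ) (x t) = ((‖x t‖ ^ 2 : ℝ) : ℂ) := by
    intro t
    rw [Complex.mul_conj, Complex.normSq_eq_norm_sq]
  rw [Finset.sum_congr rfl fun t _ => h1 t, ← Complex.ofReal_sum, hx, Complex.ofReal_one]

lemma margB (σ : Matrix (ZMod d × ZMod d) (ZMod d × ZMod d) ℂ)
    (lam : Fin n → ℝ) (φ ψ : Fin n → ZMod d → ℂ)
    (hψn : ∀ α, ∑ s, ‖ψ α s‖ ^ 2 = 1)
    (hσ : σ = ∑ α, (lam α : ℂ) •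
      Matrix.vecMulVec (fun p : ZMod d × ZMod d => φ α p.1 * ψ α p.2)
        (star (fun p : ZMod d × ZMod d => φ α p.1 * ψ α p.2)))
    (hB : (fun a b => ∑ t : ZMod d, σ (a, t) (b, t))
      = ((d : ℂ))⁻¹ • (1 : Matrix (ZMod d) (ZMod d) ℂ)) :
    ∀ a b, ∑ α, (lam α : ℂ) * (φ α a * (starRingEnd ℂ) (φ α b))
      = if a = b then ((d : ℂ))⁻¹ else 0 := by
  intro a b
  have h := congrFun (congrFun hB a) b
  simp only [Matrix.smul_apply, Matrix.one_apply, smul_ite, smul_eq_mul, mul_one, mul_zero,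
    mul_ite] at h
  rw [← h, hσ]
  simp only [Matrix.sum_apply, Matrix.smul_apply, vecMulVec_apply, Pi.star_apply, smul_eq_mul]
  rw [Finset.sum_comm]
  refine Finset.sum_congr rfl fun α _ => ?_
  have h3 : ∀ t, (lam α : ℂ) * (φ α a * ψ α t * star (φ α b * ψ α t))
      = ((lam α : ℂ) * (φ α a * (starRingEnd ℂ) (φ α b))) *
        (ψ α t * (starRingEnd ℂ) (ψ α t)) := by
    intro t
    simp only [star_mul', starRingEnd_apply]
    ring
  rw [Finset.sum_congr rfl fun t _ => h3 t, ← Finset.mul_sum, sum_self_conj (ψ α) (hψn α),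
    mul_one]

lemma margA (σ : Matrix (ZMod d × ZMod d) (ZMod d × ZMod d) ℂ)
    (lam : Fin n → ℝ) (φ ψ : Fin n → ZMod d → ℂ)
    (hφn : ∀ α, ∑ s, ‖φ α s‖ ^ 2 = 1)
    (hσ : σ = ∑ α, (lam α : ℂ) •
      Matrix.vecMulVec (fun p : ZMod d × ZMod d => φ α p.1 * ψ α p.2)
        (star (fun p : ZMod d × ZMod d => φ α p.1 * ψ α p.2)))
    (hA : (fun a b => ∑ s : ZMod d, σ (s, a) (s, b))
      = ((d : ℂ))⁻¹ • (1 : Matrix (ZMod d) (ZMod d) ℂ)) :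
    ∀ a b, ∑ α, (lam α : ℂ) * (ψ α a * (starRingEnd ℂ) (ψ α b))
      = if a = b then ((d : ℂ))⁻¹ else 0 := by
  intro a b
  have h := congrFun (congrFun hA a) b
  simp only [Matrix.smul_apply, Matrix.one_apply, smul_ite, smul_eq_mul, mul_one, mul_zero,
    mul_ite] at h
  rw [← h, hσ]
  simp only [Matrix.sum_apply, Matrix.smul_apply, vecMulVec_apply, Pi.star_apply, smul_eq_mul]
  rw [Finset.sum_comm]
  refine Finset.sum_congr rfl fun α _ => ?_
  have h3 : ∀ t, (lam α : ℂ) * (φ α t * ψ α a * star (φ α t * ψ α b))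
      = ((lam α : ℂ) * (ψ α a * (starRingEnd ℂ) (ψ α b))) *
        (φ α t * (starRingEnd ℂ) (φ α t)) := by
    intro t
    simp only [star_mul', starRingEnd_apply]
    ring
  rw [Finset.sum_congr rfl fun t _ => h3 t, ← Finset.mul_sum, sum_self_conj (φ α) (hφn α),
    mul_one]


lemma forward_classes (lam : Fin n → ℝ) (φ ψ : Fin n → ZMod d → ℂ)
    (hlam0 : ∀ α, 0 ≤ lam α) (hlam1 : ∑ α, lam α = 1)
    (hφn : ∀ α, ∑ s, ‖φ α s‖ ^ 2 = 1) (hψn : ∀ α, ∑ s, ‖ψ α s‖ ^ 2 = 1)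
    (hKφ : ∀ a b, ∑ α, (lam α : ℂ) * (φ α a * (starRingEnd ℂ) (φ α b))
      = if a = b then ((d : ℂ))⁻¹ else 0)
    (hKψ : ∀ a b, ∑ α, (lam α : ℂ) * (ψ α a * (starRingEnd ℂ) (ψ α b))
      = if a = b then ((d : ℂ))⁻¹ else 0)
    (htr : ∑ α, ∑ β, (lam α : ℂ) * (lam β : ℂ) *
        ((normSq (ip (fun p : ZMod d × ZMod d => φ α p.1 * ψ α p.2)
          (fun p : ZMod d × ZMod d => φ β p.1 * ψ β p.2)) : ℝ) : ℂ) = ((d : ℂ))⁻¹) :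
    ∃ Φ Ψ : ZMod d → EuclideanSpace ℂ (ZMod d),
      Orthonormal ℂ Φ ∧ Orthonormal ℂ Ψ ∧
      Submodule.span ℂ (Set.range Φ) = ⊤ ∧ Submodule.span ℂ (Set.range Ψ) = ⊤ ∧
      (∑ α, (lam α : ℂ) •
        Matrix.vecMulVec (fun p : ZMod d × ZMod d => φ α p.1 * ψ α p.2)
          (star (fun p : ZMod d × ZMod d => φ α p.1 * ψ α p.2)))
      = ((d : ℂ))⁻¹ • ∑ s : ZMod d,
        Matrix.vecMulVec (fun p : ZMod d × ZMod d => Φ s p.1 * Ψ s p.2)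
          (star (fun p : ZMod d × ZMod d => Φ s p.1 * Ψ s p.2)) := by
  classical
  set v : Fin n → (ZMod d × ZMod d) → ℂ := fun α => fun p => φ α p.1 * ψ α p.2 with hv
  set M : Fin n → Matrix (ZMod d × ZMod d) (ZMod d × ZMod d) ℂ :=
    fun α => Matrix.vecMulVec (v α) (star (v α)) with hM
  set nF : Fin n → Fin n → ℝ := fun α β => normSq (ip (φ α) (φ β)) with hnF
  set nG : Fin n → Fin n → ℝ := fun α β => normSq (ip (ψ α) (ψ β)) with hnG
  have hd0 : (d : ℝ) ≠ 0 := Nat.cast_ne_zero.mpr (NeZero.ne d)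
  have hnFdef : ∀ α β, nF α β = ‖ip (φ α) (φ β)‖ ^ 2 := by
    intro α β
    rw [show nF α β = normSq (ip (φ α) (φ β)) from rfl, Complex.normSq_eq_norm_sq]
  have hnGdef : ∀ α β, nG α β = ‖ip (ψ α) (ψ β)‖ ^ 2 := by
    intro α β
    rw [show nG α β = normSq (ip (ψ α) (ψ β)) from rfl, Complex.normSq_eq_norm_sq]
  have hterm : ∀ α β, ((normSq (ip (v α) (v β)) : ℝ) : ℂ)
      = ((nF α β * nG α β : ℝ) : ℂ) := by
    intro α β
    rw [show ip (v α) (v β) = ip (φ α) (φ β) * ip (ψ α) (ψ β) from ip_prod _ _ _ _,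
      Complex.normSq_mul]
    try rfl
  -- real version of the trace hypothesis
  have htrR : ∑ α, ∑ β, lam α * lam β * (nF α β * nG α β) = (d : ℝ)⁻¹ := by
    have h2 : ((∑ α, ∑ β, lam α * lam β * (nF α β * nG α β) : ℝ) : ℂ) = ((d : ℝ)⁻¹ : ℂ) := by
      push_cast
      rw [← htr]
      refine Finset.sum_congr rfl fun α _ => Finset.sum_congr rfl fun β _ => ?_
      rw [hterm α β]
      try push_cast
      try ring
    exact_mod_cast h2
  have margRφ : ∀ α, ∑ β, lam β * nF α β = (d : ℝ)⁻¹ := by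
    intro α
    have h := marg_sum lam φ hKφ (φ α) (ip_self _ (hφn α))
    have h2 : ((∑ β, lam β * nF α β : ℝ) : ℂ) = ((d : ℝ)⁻¹ : ℂ) := by
      push_cast
      rw [← h]
      try rfl
    exact_mod_cast h2
  have margRψ : ∀ α, ∑ β, lam β * nG α β = (d : ℝ)⁻¹ := by
    intro α
    have h := marg_sum lam ψ hKψ (ψ α) (ip_self _ (hψn α))
    have h2 : ((∑ β, lam β * nG α β : ℝ) : ℂ) = ((d : ℝ)⁻¹ : ℂ) := by
      push_cast
      rw [← h]
      try rfl
    exact_mod_cast h2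
  have hQ : ∑ α, ∑ β, lam α * lam β * nF α β = (d : ℝ)⁻¹ := by
    have h1 : ∀ α, ∑ β, lam α * lam β * nF α β = lam α * (d : ℝ)⁻¹ := by
      intro α
      rw [show (∑ β, lam α * lam β * nF α β) = lam α * ∑ β, lam β * nF α β by
        rw [Finset.mul_sum]; exact Finset.sum_congr rfl fun β _ => by ring, margRφ α]
    rw [Finset.sum_congr rfl fun α _ => h1 α, ← Finset.sum_mul, hlam1, one_mul]
  have hR : ∑ α, ∑ β, lam α * lam β * nG α β = (d : ℝ)⁻¹ := by
    have h1 : ∀ α, ∑ β, lam α * lam β * nG α β = lam α * (d : ℝ)⁻¹ := by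
      intro α
      rw [show (∑ β, lam α * lam β * nG α β) = lam α * ∑ β, lam β * nG α β by
        rw [Finset.mul_sum]; exact Finset.sum_congr rfl fun β _ => by ring, margRψ α]
    rw [Finset.sum_congr rfl fun α _ => h1 α, ← Finset.sum_mul, hlam1, one_mul]
  have hnFle : ∀ α β, nF α β ≤ 1 := by
    intro α β
    have h := ip_le_one (φ α) (φ β) (hφn α) (hφn β)
    rw [hnFdef α β]
    nlinarith [norm_nonneg (ip (φ α) (φ β))]
  have hnGle : ∀ α β, nG α β ≤ 1 := by
    intro α β
    have h := ip_le_one (ψ α) (ψ β) (hψn α) (hψn β)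
    rw [hnGdef α β]
    nlinarith [norm_nonneg (ip (ψ α) (ψ β))]
  have hnF0 : ∀ α β, 0 ≤ nF α β := fun α β => Complex.normSq_nonneg _
  have hnG0 : ∀ α β, 0 ≤ nG α β := fun α β => Complex.normSq_nonneg _
  have key1 : ∀ α β, lam α * (lam β * (nF α β * (1 - nG α β))) = 0 := by
    have hsum : ∑ α, ∑ β, lam α * (lam β * (nF α β * (1 - nG α β))) = 0 := by
      have expand : ∑ α, ∑ β, lam α * (lam β * (nF α β * (1 - nG α β)))
          = (∑ α, ∑ β, lam α * lam β * nF α β)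
            - ∑ α, ∑ β, lam α * lam β * (nF α β * nG α β) := by
        rw [← Finset.sum_sub_distrib]
        refine Finset.sum_congr rfl fun α _ => ?_
        rw [← Finset.sum_sub_distrib]
        exact Finset.sum_congr rfl fun β _ => by ring
      rw [expand, hQ, htrR, sub_self]
    intro α β
    have hnn : ∀ γ δ : Fin n, 0 ≤ lam γ * (lam δ * (nF γ δ * (1 - nG γ δ))) := by
      intro γ δ
      have := hnGle γ δ
      have := hnG0 γ δ
      exact mul_nonneg (hlam0 γ) (mul_nonneg (hlam0 δ)
        (mul_nonneg (hnF0 γ δ) (by linarith)))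
    have h1 := (Finset.sum_eq_zero_iff_of_nonneg
      (fun γ _ => Finset.sum_nonneg fun δ _ => hnn γ δ)).mp hsum α (Finset.mem_univ α)
    exact (Finset.sum_eq_zero_iff_of_nonneg (fun δ _ => hnn α δ)).mp h1 β (Finset.mem_univ β)
  have key2 : ∀ α β, lam α * (lam β * (nG α β * (1 - nF α β))) = 0 := by
    have hsum : ∑ α, ∑ β, lam α * (lam β * (nG α β * (1 - nF α β))) = 0 := by
      have expand : ∑ α, ∑ β, lam α * (lam β * (nG α β * (1 - nF α β)))
          = (∑ α, ∑ β, lam α * lam β * nG α β)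
            - ∑ α, ∑ β, lam α * lam β * (nF α β * nG α β) := by
        rw [← Finset.sum_sub_distrib]
        refine Finset.sum_congr rfl fun α _ => ?_
        rw [← Finset.sum_sub_distrib]
        exact Finset.sum_congr rfl fun β _ => by ring
      rw [expand, hR, htrR, sub_self]
    intro α β
    have hnn : ∀ γ δ : Fin n, 0 ≤ lam γ * (lam δ * (nG γ δ * (1 - nF γ δ))) := by
      intro γ δ
      have := hnFle γ δ
      have := hnF0 γ δ
      exact mul_nonneg (hlam0 γ) (mul_nonneg (hlam0 δ)
        (mul_nonneg (hnG0 γ δ) (by linarith)))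
    have h1 := (Finset.sum_eq_zero_iff_of_nonneg
      (fun γ _ => Finset.sum_nonneg fun δ _ => hnn γ δ)).mp hsum α (Finset.mem_univ α)
    exact (Finset.sum_eq_zero_iff_of_nonneg (fun δ _ => hnn α δ)).mp h1 β (Finset.mem_univ β)
  have dich : ∀ α β, lam α ≠ 0 → lam β ≠ 0 →
      (ip (φ α) (φ β) = 0 ∧ ip (ψ α) (ψ β) = 0) ∨ M β = M α := by
    intro α β hα hβ
    have h1 : nF α β * (1 - nG α β) = 0 := by
      have h := key1 α β
      rcases mul_eq_zero.mp h with h | h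
      · exact absurd h hα
      rcases mul_eq_zero.mp h with h | h
      · exact absurd h hβ
      · exact h
    have h2 : nG α β * (1 - nF α β) = 0 := by
      have h := key2 α β
      rcases mul_eq_zero.mp h with h | h
      · exact absurd h hα
      rcases mul_eq_zero.mp h with h | h
      · exact absurd h hβ
      · exact h
    rcases mul_eq_zero.mp h1 with hF0 | hG1
    · left
      have hFz : ip (φ α) (φ β) = 0 := by
        have : normSq (ip (φ α) (φ β)) = 0 := hF0
        exact Complex.normSq_eq_zero.mp this
      refine ⟨hFz, ?_⟩
      have hnF0' : (1 : ℝ) - nF α β = 1 := by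
        rw [show nF α β = (0 : ℝ) from hF0]; ring
      rw [hnF0', mul_one] at h2
      exact Complex.normSq_eq_zero.mp h2
    · right
      have hG1' : nG α β = 1 := by linarith [hG1]
      have hF1 : nF α β = 1 := by
        rcases mul_eq_zero.mp h2 with h | h
        · rw [hG1'] at h; exact absurd h one_ne_zero
        · linarith
      have hnφ : ‖ip (φ α) (φ β)‖ = 1 := by
        have hsq : ‖ip (φ α) (φ β)‖ ^ 2 = 1 := by
          rw [← hnFdef α β]; exact hF1
        have h0 := norm_nonneg (ip (φ α) (φ β))
        nlinarith
      have hnψ : ‖ip (ψ α) (ψ β)‖ = 1 := by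
        have hsq : ‖ip (ψ α) (ψ β)‖ ^ 2 = 1 := by
          rw [← hnGdef α β]; exact hG1'
        have h0 := norm_nonneg (ip (ψ α) (ψ β))
        nlinarith
      have hφeq := ip_eq_one_case (φ α) (φ β) (hφn α) (hφn β) hnφ
      have hψeq := ip_eq_one_case (ψ α) (ψ β) (hψn α) (hψn β) hnψ
      have hc : (ip (φ α) (φ β) * ip (ψ α) (ψ β)) *
          (starRingEnd ℂ) (ip (φ α) (φ β) * ip (ψ α) (ψ β)) = 1 := by
        rw [Complex.mul_conj, Complex.normSq_mul,
          show normSq (ip (φ α) (φ β)) = nF α β from rfl,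
          show normSq (ip (ψ α) (ψ β)) = nG α β from rfl, hF1, hG1']
        norm_num
      have hvb : ∀ p : ZMod d × ZMod d,
          v β p = (ip (φ α) (φ β) * ip (ψ α) (ψ β)) * v α p := by
        intro p
        show φ β p.1 * ψ β p.2 = _
        rw [congrFun hφeq p.1, congrFun hψeq p.2]
        show (ip (φ α) (φ β) * φ α p.1) * (ip (ψ α) (ψ β) * ψ α p.2) =
          (ip (φ α) (φ β) * ip (ψ α) (ψ β)) * (φ α p.1 * ψ α p.2)
        ring
      apply Matrix.ext
      intro p q
      show v β p * star (v β q) = v α p * star (v α q)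
      rw [hvb p, hvb q, star_mul']
      rw [show star (ip (φ α) (φ β) * ip (ψ α) (ψ β))
        = (starRingEnd ℂ) (ip (φ α) (φ β) * ip (ψ α) (ψ β)) from rfl]
      linear_combination (v α p * star (v α q)) * hc
  have trMM : ∀ α β, (M α * M β).trace = ((nF α β * nG α β : ℝ) : ℂ) := by
    intro α β
    rw [show M α = vecMulVec (v α) (star (v α)) from rfl,
      show M β = vecMulVec (v β) (star (v β)) from rfl, trace_vmv, hterm α β]
  have trM1 : ∀ α, (M α * M α).trace = 1 := by
    intro α
    rw [trMM α α, show nF α α = normSq (ip (φ α) (φ α)) from rfl,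
      show nG α α = normSq (ip (ψ α) (ψ α)) from rfl, ip_self _ (hφn α), ip_self _ (hψn α)]
    norm_num
  have Meq1 : ∀ α β, M β = M α → nF α β * nG α β = 1 := by
    intro α β h
    have h1 := trMM α β
    rw [h, trM1 α] at h1
    exact_mod_cast h1.symm
  have indicator : ∀ α β, lam α ≠ 0 → lam β ≠ 0 →
      nF α β * nG α β = if M β = M α then 1 else 0 := by
    intro α β hα hβ
    by_cases hMc : M β = M α
    · rw [if_pos hMc]; exact Meq1 α β hMc
    · rw [if_neg hMc]
      rcases dich α β hα hβ with ⟨h1, _⟩ | h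
      · rw [show nF α β = normSq (ip (φ α) (φ β)) from rfl, h1, Complex.normSq_zero, zero_mul]
      · exact absurd h hMc
  have mu : ∀ α, lam α ≠ 0 →
      ∑ β ∈ Finset.univ.filter (fun β => lam β ≠ 0 ∧ M β = M α), lam β = (d : ℝ)⁻¹ := by
    intro α hα
    have t0 : ∀ β, lam β * (nF α β * (1 - nG α β)) = 0 := by
      intro β
      rcases mul_eq_zero.mp (key1 α β) with h | h
      · exact absurd h hα
      · exact h
    have e1 : ∑ β, lam β * (nF α β * nG α β) = (d : ℝ)⁻¹ := by
      have t1 : ∀ β, lam β * (nF α β * nG α β) = lam β * nF α β := by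
        intro β
        linear_combination -t0 β
      rw [Finset.sum_congr rfl fun β _ => t1 β]
      exact margRφ α
    have e2 : ∀ β, lam β * (nF α β * nG α β)
        = if (lam β ≠ 0 ∧ M β = M α) then lam β else 0 := by
      intro β
      by_cases hβ : lam β = 0
      · simp [hβ]
      · rw [indicator α β hα hβ]
        by_cases hMc : M β = M α
        · simp [hMc, hβ]
        · simp [hMc]
    rw [Finset.sum_filter, ← Finset.sum_congr rfl fun β _ => e2 β]
    exact e1
  -- the classes
  set S : Finset (Fin n) := Finset.univ.filter (fun α => lam α ≠ 0) with hS
  set W : Finset (Matrix (ZMod d × ZMod d) (ZMod d × ZMod d) ℂ) := S.image M with hW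
  have hmu : ∀ c ∈ W, ∑ β ∈ S.filter (fun β => M β = c), lam β = (d : ℝ)⁻¹ := by
    intro c hc
    obtain ⟨α, hαS, hαM⟩ := Finset.mem_image.mp hc
    subst hαM
    have hα0 : lam α ≠ 0 := (Finset.mem_filter.mp hαS).2
    rw [hS, Finset.filter_filter]
    exact mu α hα0
  have hsumS : ∑ β ∈ S, lam β = 1 := by
    rw [hS, Finset.sum_filter_of_ne (fun x _ hx => hx)]
    exact hlam1
  have hfib := Finset.sum_fiberwise_of_maps_to (s := S) (t := W) (g := M)
    (fun x hx => Finset.mem_image_of_mem M hx) lam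
  rw [Finset.sum_congr rfl hmu, Finset.sum_const, nsmul_eq_mul, hsumS] at hfib
  have hcard : W.card = d := by
    have : (W.card : ℝ) = (d : ℝ) := by
      field_simp at hfib
      exact_mod_cast hfib
    exact_mod_cast this
  have ecard : Fintype.card (ZMod d) = Fintype.card {x // x ∈ W} := by
    rw [ZMod.card, Fintype.card_coe, hcard]
  let e : ZMod d ≃ {x // x ∈ W} := Fintype.equivOfCardEq ecard
  have hrepex : ∀ s : ZMod d, ∃ α, α ∈ S ∧ M α
      = ((e s : {x // x ∈ W}) : Matrix (ZMod d × ZMod d) (ZMod d × ZMod d) ℂ) := by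
    intro s
    obtain ⟨α, hα, hMα⟩ := Finset.mem_image.mp (e s).2
    exact ⟨α, hα, hMα⟩
  choose rep hrepS hrepM using hrepex
  have lamrep : ∀ s, lam (rep s) ≠ 0 := fun s => (Finset.mem_filter.mp (hrepS s)).2
  have hMne : ∀ s t : ZMod d, s ≠ t → M (rep s) ≠ M (rep t) := by
    intro s t hst h
    exact hst (e.injective (Subtype.coe_injective ((hrepM s).symm.trans (h.trans (hrepM t)))))
  refine ⟨fun s => toE (φ (rep s)), fun s => toE (ψ (rep s)), ?_, ?_, ?_, ?_, ?_⟩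
  · rw [orthonormal_iff_ite]
    intro s t
    rcases eq_or_ne s t with rfl | hst
    · rw [if_pos rfl, ← ip_eq_inner, ip_self _ (hφn _)]
    · rw [if_neg hst, ← ip_eq_inner]
      rcases dich (rep s) (rep t) (lamrep s) (lamrep t) with ⟨h1, _⟩ | h
      · exact h1
      · exact absurd h (hMne t s hst.symm)
  · rw [orthonormal_iff_ite]
    intro s t
    rcases eq_or_ne s t with rfl | hst
    · rw [if_pos rfl, ← ip_eq_inner, ip_self _ (hψn _)]
    · rw [if_neg hst, ← ip_eq_inner]
      rcases dich (rep s) (rep t) (lamrep s) (lamrep t) with ⟨_, h2⟩ | h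
      · exact h2
      · exact absurd h (hMne t s hst.symm)
  · have hon : Orthonormal ℂ (fun s => toE (φ (rep s))) := by
      rw [orthonormal_iff_ite]
      intro s t
      rcases eq_or_ne s t with rfl | hst
      · rw [if_pos rfl, ← ip_eq_inner, ip_self _ (hφn _)]
      · rw [if_neg hst, ← ip_eq_inner]
        rcases dich (rep s) (rep t) (lamrep s) (lamrep t) with ⟨h1, _⟩ | h
        · exact h1
        · exact absurd h (hMne t s hst.symm)
    exact hon.linearIndependent.span_eq_top_of_card_eq_finrank
      (by rw [finrank_euclideanSpace])
  · have hon : Orthonormal ℂ (fun s => toE (ψ (rep s))) := by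
      rw [orthonormal_iff_ite]
      intro s t
      rcases eq_or_ne s t with rfl | hst
      · rw [if_pos rfl, ← ip_eq_inner, ip_self _ (hψn _)]
      · rw [if_neg hst, ← ip_eq_inner]
        rcases dich (rep s) (rep t) (lamrep s) (lamrep t) with ⟨_, h2⟩ | h
        · exact h2
        · exact absurd h (hMne t s hst.symm)
    exact hon.linearIndependent.span_eq_top_of_card_eq_finrank
      (by rw [finrank_euclideanSpace])
  · show (∑ α, (lam α : ℂ) • M α) = ((d : ℂ))⁻¹ • ∑ s : ZMod d, M (rep s)
    calc ∑ α, (lam α : ℂ) • M α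
        = ∑ α ∈ S, (lam α : ℂ) • M α := by
          refine (Finset.sum_filter_of_ne ?_).symm
          intro x _ hne h0
          exact hne (by rw [h0]; simp)
      _ = ∑ c ∈ W, ∑ α ∈ S.filter (fun β => M β = c), (lam α : ℂ) • M α :=
          (Finset.sum_fiberwise_of_maps_to (s := S) (t := W) (g := M)
            (fun x hx => Finset.mem_image_of_mem M hx) _).symm
      _ = ∑ c ∈ W, ((d : ℂ))⁻¹ • c := by
          refine Finset.sum_congr rfl fun c hc => ?_
          have h1 : ∀ α ∈ S.filter (fun β => M β = c), (lam α : ℂ) • M α = (lam α : ℂ) • c := by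
            intro α hα
            rw [(Finset.mem_filter.mp hα).2]
          rw [Finset.sum_congr rfl h1, ← Finset.sum_smul]
          congr 1
          have h3 : ((∑ β ∈ S.filter (fun β => M β = c), lam β : ℝ) : ℂ)
              = (((d : ℝ)⁻¹ : ℝ) : ℂ) := congrArg Complex.ofReal (hmu c hc)
          push_cast at h3
          exact h3
      _ = ((d : ℂ))⁻¹ • ∑ c ∈ W, c := by rw [Finset.smul_sum]
      _ = ((d : ℂ))⁻¹ • ∑ s : ZMod d, M (rep s) := by
          congr 1
          have h4 : ∑ s : ZMod d, M (rep s) = ∑ c ∈ W, c := by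
            rw [Finset.sum_congr rfl (fun s _ => hrepM s),
              Equiv.sum_comp e (fun w : {x // x ∈ W} =>
                (w : Matrix (ZMod d × ZMod d) (ZMod d × ZMod d) ℂ))]
            exact Finset.sum_coe_sort W (fun x => x)
          exact h4.symm


end AuxSepLMM

/-- A separable LMM density matrix attains `Tr σ² = 1/d` iff it is of the form
`σ = (1/d) Σ_s |φ_s,ψ_s⟩⟨φ_s,ψ_s|` for orthonormal bases `{φ_s}`, `{ψ_s}` of `ℂ^d`. -/
theorem separable_LMM_max_purity_iff (d : ℕ) [NeZero d]
    (σ : Matrix (ZMod d × ZMod d) (ZMod d × ZMod d) ℂ)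
    (hsep : IsSeparableState d σ)
    (hB : (fun a b => ∑ t : ZMod d, σ (a, t) (b, t))
      = ((d : ℂ))⁻¹ • (1 : Matrix (ZMod d) (ZMod d) ℂ))
    (hA : (fun a b => ∑ s : ZMod d, σ (s, a) (s, b))
      = ((d : ℂ))⁻¹ • (1 : Matrix (ZMod d) (ZMod d) ℂ)) :
    (σ * σ).trace = ((d : ℂ))⁻¹ ↔
    ∃ φ ψ : ZMod d → EuclideanSpace ℂ (ZMod d),
      Orthonormal ℂ φ ∧ Orthonormal ℂ ψ ∧
      Submodule.span ℂ (Set.range φ) = ⊤ ∧ Submodule.span ℂ (Set.range ψ) = ⊤ ∧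
      σ = ((d : ℂ))⁻¹ • ∑ s : ZMod d,
        Matrix.vecMulVec (fun p : ZMod d × ZMod d => φ s p.1 * ψ s p.2)
          (star (fun p : ZMod d × ZMod d => φ s p.1 * ψ s p.2)) := by
  obtain ⟨n, lam, φ, ψ, hlam0, hlam1, hφn, hψn, hσ⟩ := hsep
  have hKφ := margB σ lam φ ψ hψn hσ hB
  have hKψ := margA σ lam φ ψ hφn hσ hA
  have hd0 : (d : ℂ) ≠ 0 := Nat.cast_ne_zero.mpr (NeZero.ne d)
  have htreq : (σ * σ).trace = ∑ α, ∑ β, (lam α : ℂ) * (lam β : ℂ) *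
      ((Complex.normSq (ip (fun p : ZMod d × ZMod d => φ α p.1 * ψ α p.2)
        (fun p : ZMod d × ZMod d => φ β p.1 * ψ β p.2)) : ℝ) : ℂ) := by
    rw [hσ]
    exact trace_sq _ _
  constructor
  · intro h
    obtain ⟨Φ, Ψ, h1, h2, h3, h4, h5⟩ := forward_classes lam φ ψ hlam0 hlam1 hφn hψn hKφ hKψ
      (by rw [← htreq]; exact h)
    exact ⟨Φ, Ψ, h1, h2, h3, h4, by rw [hσ]; exact h5⟩
  · rintro ⟨Φ, Ψ, hΦ, hΨ, -, -, hform⟩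
    have hσ' : σ = ∑ s : ZMod d, ((d : ℂ))⁻¹ •
        Matrix.vecMulVec (fun p : ZMod d × ZMod d => Φ s p.1 * Ψ s p.2)
          (star (fun p : ZMod d × ZMod d => Φ s p.1 * Ψ s p.2)) := by
      rw [hform, Finset.smul_sum]
    rw [hσ', trace_sq (fun _ : ZMod d => ((d : ℂ))⁻¹)
      (fun s => fun p : ZMod d × ZMod d => Φ s p.1 * Ψ s p.2)]
    have hip : ∀ s t : ZMod d, ip (fun p : ZMod d × ZMod d => Φ s p.1 * Ψ s p.2)
        (fun p : ZMod d × ZMod d => Φ t p.1 * Ψ t p.2)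
        = if s = t then 1 else 0 := by
      intro s t
      rw [show (fun p : ZMod d × ZMod d => Φ s p.1 * Ψ s p.2)
          = (fun p : ZMod d × ZMod d => (fun a => Φ s a) p.1 * (fun a => Ψ s a) p.2) from rfl,
        show (fun p : ZMod d × ZMod d => Φ t p.1 * Ψ t p.2)
          = (fun p : ZMod d × ZMod d => (fun a => Φ t a) p.1 * (fun a => Ψ t a) p.2) from rfl,
        ip_prod]
      have h1 : ip (fun a => Φ s a) (fun a => Φ t a) = if s = t then 1 else 0 := by
        rw [← orthonormal_iff_ite.mp hΦ s t, ip_eq_inner]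
        rfl
      have h2 : ip (fun a => Ψ s a) (fun a => Ψ t a) = if s = t then 1 else 0 := by
        rw [← orthonormal_iff_ite.mp hΨ s t, ip_eq_inner]
        rfl
      rw [h1, h2]
      by_cases h : s = t <;> simp [h]
    have hterm2 : ∀ s t : ZMod d, ((d : ℂ))⁻¹ * ((d : ℂ))⁻¹ *
        ((Complex.normSq (ip (fun p : ZMod d × ZMod d => Φ s p.1 * Ψ s p.2)
          (fun p : ZMod d × ZMod d => Φ t p.1 * Ψ t p.2)) : ℝ) : ℂ)
        = if s = t then ((d : ℂ))⁻¹ * ((d : ℂ))⁻¹ else 0 := by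
      intro s t
      rw [hip s t]
      by_cases h : s = t <;> simp [h]
    rw [Finset.sum_congr rfl fun s _ => Finset.sum_congr rfl fun t _ => hterm2 s t]
    simp only [Finset.sum_ite_eq, Finset.mem_univ, if_pos, Finset.sum_const,
      Finset.card_univ, ZMod.card, nsmul_eq_mul]
    field_simp
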